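/- In V = ℝ⁵ define C₁ = (1,0,0,1,0), C₂ = (0,1,0,1,0), C₃ = (0,0,1,1,0), C₄ = (−1,−1,−1,−2,1), C₅ = (0,0,0,−1,0), and M₁ = (1,0,0,0,2), M₂ = (0,1,0,0,2), M₃ = (0,0,1,0,2), M₄ = (0,0,0,1,1), M₅ = (0,0,0,0,1), M₆ = (1,1,1,0,3). Let 𝒞 be the set of linear combinations of C₁,…,C₅ with nonnegative real coefficients and ℳ the set of linear combinations of M₁,…,M₆ with nonnegative real coefficients, and set α = (1,1,0,1,2). Then M₁ ∈ ℳ, M₂ ∈ ℳ, α − M₁ = C₂ ∈ 𝒞 and α − M₂ = C₁ ∈ 𝒞, but there exists no β ∈ ℳ with α − β ∈ 𝒞, β − M₁ ∈ 𝒞, and β − M₂ ∈ 𝒞. Consequently the set S := { β ∈ ℳ : α − β ∈ 𝒞 } contains M₁ and M₂ but is not directed under the partial order β ⪯ β′ defined by β′ − β ∈ 𝒞. -/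

import Mathlib

/-! **Example 5.10** of the paper.  In `N₁(X) ≅ ℝ⁵` for the smooth toric threefold
described there, the pseudo-effective cone of curves is generated by `C₁, …, C₅` and
the movable cone of curves by `M₁, …, M₆`.  For the big non-movable class
`α = (1,1,0,1,2)` the set of movable classes dominated by `α` is not directed. -/

noncomputable section

def vC1 : Fin 5 → ℝ := ![1, 0, 0, 1, 0]
def vC2 : Fin 5 → ℝ := ![0, 1, 0, 1, 0]
def vC3 : Fin 5 → ℝ := ![0, 0, 1, 1, 0]
def vC4 : Fin 5 → ℝ := ![-1, -1, -1, -2, 1]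
def vC5 : Fin 5 → ℝ := ![0, 0, 0, -1, 0]

def vM1 : Fin 5 → ℝ := ![1, 0, 0, 0, 2]
def vM2 : Fin 5 → ℝ := ![0, 1, 0, 0, 2]
def vM3 : Fin 5 → ℝ := ![0, 0, 1, 0, 2]
def vM4 : Fin 5 → ℝ := ![0, 0, 0, 1, 1]
def vM5 : Fin 5 → ℝ := ![0, 0, 0, 0, 1]
def vM6 : Fin 5 → ℝ := ![1, 1, 1, 0, 3]

/-- The cone `𝒞` of nonnegative combinations of `C₁, …, C₅` (the pseudo-effective
cone of curves). -/
def effCone : Set (Fin 5 → ℝ) :=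
  {v | ∃ a : Fin 5 → ℝ, (∀ i, 0 ≤ a i) ∧
    v = a 0 • vC1 + a 1 • vC2 + a 2 • vC3 + a 3 • vC4 + a 4 • vC5}

/-- The cone `ℳ` of nonnegative combinations of `M₁, …, M₆` (the movable cone of
curves). -/
def movCone : Set (Fin 5 → ℝ) :=
  {v | ∃ b : Fin 6 → ℝ, (∀ i, 0 ≤ b i) ∧
    v = b 0 • vM1 + b 1 • vM2 + b 2 • vM3 + b 3 • vM4 + b 4 • vM5 + b 5 • vM6}

def alphaVec : Fin 5 → ℝ := ![1, 1, 0, 1, 2]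

/-- The set `S = { β ∈ ℳ : α − β ∈ 𝒞 }` contains `M₁` and `M₂` (indeed
`α − M₁ = C₂` and `α − M₂ = C₁`), but is not directed under the order `β ⪯ β'`
iff `β' − β ∈ 𝒞`: no `β ∈ S` dominates both `M₁` and `M₂`. -/

theorem movable_classes_below_alpha_not_directed :
    vM1 ∈ movCone ∧ vM2 ∈ movCone ∧
    alphaVec - vM1 = vC2 ∧ alphaVec - vM2 = vC1 ∧
    vC2 ∈ effCone ∧ vC1 ∈ effCone ∧
    ¬ ∃ β ∈ movCone,
        alphaVec - β ∈ effCone ∧ β - vM1 ∈ effCone ∧ β - vM2 ∈ effCone := by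
  refine ⟨⟨![1,0,0,0,0,0], fun i => by
           fin_cases i <;> norm_num [show ((![1,0,0,0,0,0]:Fin 6 → ℝ) 5) = 0 from rfl], ?_⟩,
         ⟨![0,1,0,0,0,0], fun i => by
           fin_cases i <;> norm_num [show ((![0,1,0,0,0,0]:Fin 6 → ℝ) 5) = 0 from rfl], ?_⟩,
         ?_, ?_,
         ⟨![0,1,0,0,0], fun i => by fin_cases i <;> norm_num, ?_⟩,
         ⟨![1,0,0,0,0], fun i => by fin_cases i <;> norm_num, ?_⟩, ?_⟩
  · funext i; fin_cases i <;>
      norm_num [vM1, vM2, vM3, vM4, vM5, vM6,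
        show ((![1,0,0,0,0,0]:Fin 6 → ℝ) 5) = 0 from rfl,
        show ((![1,0,0,0,0,0]:Fin 6 → ℝ) 2) = 0 from rfl,
        show ((![1,0,0,0,0,0]:Fin 6 → ℝ) 3) = 0 from rfl,
        show ((![1,0,0,0,0,0]:Fin 6 → ℝ) 4) = 0 from rfl]
  · funext i; fin_cases i <;>
      norm_num [vM1, vM2, vM3, vM4, vM5, vM6,
        show ((![0,1,0,0,0,0]:Fin 6 → ℝ) 5) = 0 from rfl,
        show ((![0,1,0,0,0,0]:Fin 6 → ℝ) 2) = 0 from rfl,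
        show ((![0,1,0,0,0,0]:Fin 6 → ℝ) 3) = 0 from rfl,
        show ((![0,1,0,0,0,0]:Fin 6 → ℝ) 4) = 0 from rfl]
  · funext i; fin_cases i <;> norm_num [alphaVec, vM1, vC2]
  · funext i; fin_cases i <;> norm_num [alphaVec, vM2, vC1]
  · funext i; fin_cases i <;> norm_num [vC1, vC2, vC3, vC4, vC5,
      show ((![0,1,0,0,0]:Fin 5 → ℝ) 2) = 0 from rfl, show ((![0,1,0,0,0]:Fin 5 → ℝ) 3) = 0 from rfl,
      show ((![0,1,0,0,0]:Fin 5 → ℝ) 4) = 0 from rfl]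
  · funext i; fin_cases i <;> norm_num [vC1, vC2, vC3, vC4, vC5,
      show ((![1,0,0,0,0]:Fin 5 → ℝ) 2) = 0 from rfl, show ((![1,0,0,0,0]:Fin 5 → ℝ) 3) = 0 from rfl,
      show ((![1,0,0,0,0]:Fin 5 → ℝ) 4) = 0 from rfl]
  · rintro ⟨β, ⟨b, hb, hβ⟩, ⟨a, ha, hA⟩, ⟨c, hc, hC⟩, ⟨d, hd, hD⟩⟩
    have hβ0 := congrFun hβ 0
    have hβ1 := congrFun hβ 1
    have hβ2 := congrFun hβ 2
    have hβ3 := congrFun hβ 3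
    have hβ4 := congrFun hβ 4
    have hA0 := congrFun hA 0
    have hA1 := congrFun hA 1
    have hA2 := congrFun hA 2
    have hA3 := congrFun hA 3
    have hA4 := congrFun hA 4
    have hC0 := congrFun hC 0
    have hC1 := congrFun hC 1
    have hC2 := congrFun hC 2
    have hC3 := congrFun hC 3
    have hC4 := congrFun hC 4
    have hD0 := congrFun hD 0
    have hD1 := congrFun hD 1
    have hD2 := congrFun hD 2
    have hD3 := congrFun hD 3
    have hD4 := congrFun hD 4
    simp only [Pi.add_apply, Pi.sub_apply, Pi.smul_apply, smul_eq_mul,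
      vC1, vC2, vC3, vC4, vC5, vM1, vM2, vM3, vM4, vM5, vM6, alphaVec,
      Matrix.cons_val_zero, Matrix.cons_val_one, Matrix.head_cons,
      Matrix.cons_val_two, Matrix.tail_cons, Matrix.cons_val_three,
      Matrix.cons_val_four, Matrix.cons_val_succ] at hβ0 hβ1 hβ2 hβ3 hβ4 hA0 hA1 hA2 hA3 hA4 hC0 hC1 hC2 hC3 hC4 hD0 hD1 hD2 hD3 hD4
    have h1 := hb 0; have h2 := hb 1; have h3 := hb 2; have h4 := hb 3
    have h5 := hb 4; have h6 := hb 5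
    have g1 := ha 0; have g2 := ha 1; have g3 := ha 2; have g4 := ha 3; have g5 := ha 4
    have k1 := hc 0; have k2 := hc 1; have k3 := hc 2; have k4 := hc 3; have k5 := hc 4
    have l1 := hd 0; have l2 := hd 1; have l3 := hd 2; have l4 := hd 3; have l5 := hd 4
    linarith

end
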